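/- arXiv:1211.4461 — 4 statements merged into one kernel-verified Lean document; each statement's English description precedes it below -/
import Mathlib

section
/- Let 0 < γ < π/2 and R > 0, and let f : ℂ → ℂ be complex differentiable on an open set containing the closed sector S(R,γ) = {r·e^{iθ} : 0 ≤ r ≤ R, 0 ≤ θ ≤ γ}. Then ∫₀^R f(t) dt = e^{iγ} · ∫₀^R f(t·e^{iγ}) dt − i·R·∫₀^γ e^{iθ} · f(R·e^{iθ}) dθ, i.e. the integral of f over the real segment [0,R] equals the integral over the rotated segment {t·e^{iγ} : t ∈ [0,R]} plus the (negatively oriented) contribution of the circular arc {R·e^{iθ} : θ ∈ [0,γ]}. -/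
open MeasureTheory Filter Set Complex intervalIntegral

/-- **Contour decomposition over a closed sector.**
For `0 < γ < π/2`, `R > 0` and `f` complex differentiable on an open set containing the
closed sector `S(R,γ) = {r·e^{iθ} : 0 ≤ r ≤ R, 0 ≤ θ ≤ γ}`, the integral of `f` over the
real segment `[0,R]` equals the integral over the rotated segment plus the (negatively
oriented) arc contribution. -/
theorem sector_contour_decomposition (γ R : ℝ) (hγ0 : 0 < γ) (hγ : γ < Real.pi / 2)
    (hR : 0 < R) (f : ℂ → ℂ)
    (hf : ∃ U : Set ℂ, IsOpen U ∧
      {z : ℂ | ∃ r θ : ℝ, 0 ≤ r ∧ r ≤ R ∧ 0 ≤ θ ∧ θ ≤ γ ∧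
        z = (r : ℂ) * Complex.exp ((θ : ℂ) * Complex.I)} ⊆ U ∧
      DifferentiableOn ℂ f U) :
    ∫ t in (0:ℝ)..R, f t =
      Complex.exp ((γ : ℂ) * Complex.I) *
        (∫ t in (0:ℝ)..R, f ((t : ℂ) * Complex.exp ((γ : ℂ) * Complex.I)))
      - Complex.I * (R : ℂ) *
        ∫ θ in (0:ℝ)..γ,
          Complex.exp ((θ : ℂ) * Complex.I) * f ((R : ℂ) * Complex.exp ((θ : ℂ) * Complex.I)) := by
  obtain ⟨U, hU, hKU, hfd⟩ := hf
  set K : Set ℂ := {z : ℂ | ∃ r θ : ℝ, 0 ≤ r ∧ r ≤ R ∧ 0 ≤ θ ∧ θ ≤ γ ∧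
      z = (r : ℂ) * Complex.exp ((θ : ℂ) * Complex.I)} with hKdef
  have hfc : ContinuousOn f U := hfd.continuousOn
  have hmemK : ∀ r θ : ℝ, 0 ≤ r → r ≤ R → 0 ≤ θ → θ ≤ γ →
      (r : ℂ) * Complex.exp ((θ : ℂ) * Complex.I) ∈ K :=
    fun r θ h1 h2 h3 h4 => ⟨r, θ, h1, h2, h3, h4, rfl⟩
  -- `K` is compact
  have hKcomp : IsCompact K := by
    have : K = (fun p : ℝ × ℝ => (p.1 : ℂ) * Complex.exp ((p.2 : ℂ) * Complex.I)) ''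
        (Icc 0 R ×ˢ Icc 0 γ) := by
      ext z
      constructor
      · rintro ⟨r, θ, h1, h2, h3, h4, rfl⟩
        exact ⟨(r, θ), ⟨⟨h1, h2⟩, ⟨h3, h4⟩⟩, rfl⟩
      · rintro ⟨⟨r, θ⟩, ⟨⟨h1, h2⟩, ⟨h3, h4⟩⟩, rfl⟩
        exact ⟨r, θ, h1, h2, h3, h4, rfl⟩
    rw [this]
    exact (isCompact_Icc.prod isCompact_Icc).image <| by continuity
  obtain ⟨M, hM⟩ := hKcomp.exists_bound_of_continuousOn (hfc.mono hKU)
  have h0K : (0 : ℂ) ∈ K := ⟨0, 0, le_refl _, hR.le, le_refl _, hγ0.le, by simp⟩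
  have hM0 : 0 ≤ M := le_trans (norm_nonneg _) (hM 0 h0K)
  set E : ℂ := Complex.exp ((γ : ℂ) * Complex.I) with hEdef
  have hEnorm : ‖E‖ = 1 := by
    have h : ‖E‖ = 1 := Complex.norm_exp_ofReal_mul_I γ
    exact h
  -- interval integrability of the two segment integrands on `[0, R]`
  have hcont1 : ContinuousOn (fun t : ℝ => f (t : ℂ)) (Icc 0 R) := by
    refine (hfc.comp Complex.continuous_ofReal.continuousOn ?_)
    intro t ht
    exact hKU (by simpa using hmemK t 0 ht.1 ht.2 le_rfl hγ0.le)
  have hcont2 : ContinuousOn (fun t : ℝ => f ((t : ℂ) * E)) (Icc 0 R) := by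
    refine hfc.comp (by fun_prop) ?_
    intro t ht
    exact hKU (hmemK t γ ht.1 ht.2 hγ0.le le_rfl)
  -- the arc integral
  set Carc : ℂ := ∫ θ in (0:ℝ)..γ,
      Complex.exp ((θ : ℂ) * Complex.I) * f ((R : ℂ) * Complex.exp ((θ : ℂ) * Complex.I))
    with hCarc
  set D : ℂ := (∫ t in (0:ℝ)..R, f t) -
      (E * (∫ t in (0:ℝ)..R, f ((t : ℂ) * E)) - Complex.I * (R : ℂ) * Carc) with hDdef
  -- Main estimate for each small ε
  have key : ∀ ε : ℝ, 0 < ε → ε < R → ‖D‖ ≤ ε * (2 * M + γ * M) := by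
    intro ε hε hεR
    set a : ℝ := Real.log ε with ha
    set b : ℝ := Real.log R with hb
    have hab : a ≤ b := (Real.log_lt_log hε hεR).le
    have hexpa : Real.exp a = ε := Real.exp_log hε
    have hexpb : Real.exp b = R := Real.exp_log hR
    have hexp_mem : ∀ x ∈ uIcc a b, Real.exp x ∈ Icc ε R := by
      intro x hx
      rw [uIcc_of_le hab] at hx
      exact ⟨hexpa ▸ Real.exp_le_exp.2 hx.1, hexpb ▸ Real.exp_le_exp.2 hx.2⟩
    set g : ℂ → ℂ := fun w => Complex.exp w * f (Complex.exp w) with hg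
    -- the rectangle maps into `K`
    have hrect : ∀ z : ℂ, z.re ∈ uIcc a b → z.im ∈ uIcc (0:ℝ) γ → Complex.exp z ∈ K := by
      intro z hre him
      rw [uIcc_of_le hγ0.le] at him
      have h1 := hexp_mem z.re hre
      have : Complex.exp z = ((Real.exp z.re : ℝ) : ℂ) *
          Complex.exp ((z.im : ℂ) * Complex.I) := by
        rw [Complex.ofReal_exp, ← Complex.exp_add, Complex.re_add_im]
      rw [this]
      exact hmemK _ _ (Real.exp_pos _).le (h1.2) him.1 him.2
    -- Cauchy-Goursat on the rectangle for `g`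
    have hgd : DifferentiableOn ℂ g (uIcc a b ×ℂ uIcc (0:ℝ) γ) := by
      have hsub : (uIcc a b ×ℂ uIcc (0:ℝ) γ) ⊆ Complex.exp ⁻¹' U := by
        intro z hz
        rw [Complex.mem_reProdIm] at hz
        exact hKU (hrect z hz.1 hz.2)
      have : DifferentiableOn ℂ g (Complex.exp ⁻¹' U) := by
        refine Complex.differentiable_exp.differentiableOn.mul ?_
        exact hfd.comp Complex.differentiable_exp.differentiableOn (fun z hz => hz)
      exact this.mono hsub
    have hrect0 :=
      Complex.integral_boundary_rect_eq_zero_of_differentiableOn g ⟨a, 0⟩ ⟨b, γ⟩ (by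
        simpa using hgd)
    simp only [Complex.ofReal_zero, zero_mul, add_zero, smul_eq_mul] at hrect0
    -- identify the four sides
    have hsubst : ∀ G : ℝ → ℂ, ContinuousOn G (Icc ε R) →
        (∫ x in a..b, Real.exp x • G (Real.exp x)) = ∫ t in ε..R, G t := by
      intro G hG
      have := intervalIntegral.integral_comp_smul_deriv'
        (f := Real.exp) (f' := Real.exp) (g := G) (a := a) (b := b)
        (fun x _ => Real.hasDerivAt_exp x) Real.continuous_exp.continuousOn ?_
      · rw [hexpa, hexpb] at this
        exact this
      · refine hG.mono ?_
        intro t ht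
        obtain ⟨x, hx, rfl⟩ := ht
        exact hexp_mem x hx
    have hbot : (∫ x in a..b, g (x : ℂ)) = ∫ t in ε..R, f t := by
      rw [show (∫ x in a..b, g (x : ℂ))
          = ∫ x in a..b, Real.exp x • (fun t : ℝ => f (t : ℂ)) (Real.exp x) from ?_]
      · exact hsubst _ (hcont1.mono (Icc_subset_Icc hε.le le_rfl))
      · refine intervalIntegral.integral_congr fun x _ => ?_
        simp [g, Complex.real_smul, ← Complex.ofReal_exp]
    have htop : (∫ x in a..b, g ((x : ℂ) + (γ:ℝ) * Complex.I))
        = E * ∫ t in ε..R, f ((t : ℂ) * E) := by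
      rw [show (∫ x in a..b, g ((x : ℂ) + (γ:ℝ) * Complex.I))
          = ∫ x in a..b, Real.exp x • (fun t : ℝ => E * f ((t : ℂ) * E)) (Real.exp x) from ?_,
        hsubst (fun t : ℝ => E * f ((t : ℂ) * E)) ((continuous_const.continuousOn).mul
          (hcont2.mono (Icc_subset_Icc hε.le le_rfl))), intervalIntegral.integral_const_mul]
      refine intervalIntegral.integral_congr fun x _ => ?_
      simp only [g, Complex.exp_add, Complex.real_smul, ← Complex.ofReal_exp, hEdef]
      ring
    have hright : (∫ y in (0:ℝ)..γ, g ((b : ℂ) + (y : ℂ) * Complex.I)) = (R : ℂ) * Carc := by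
      rw [hCarc, ← intervalIntegral.integral_const_mul]
      refine intervalIntegral.integral_congr fun y _ => ?_
      simp only [g, Complex.exp_add, ← Complex.ofReal_exp, hexpb]
      ring
    have hleft : (∫ y in (0:ℝ)..γ, g ((a : ℂ) + (y : ℂ) * Complex.I))
        = (ε : ℂ) * ∫ y in (0:ℝ)..γ,
            Complex.exp ((y : ℂ) * Complex.I) * f ((ε : ℂ) * Complex.exp ((y : ℂ) * Complex.I)) := by
      rw [← intervalIntegral.integral_const_mul]
      refine intervalIntegral.integral_congr fun y _ => ?_
      simp only [g, Complex.exp_add, ← Complex.ofReal_exp, hexpa]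
      ring
    rw [hbot, htop, hright, hleft] at hrect0
    -- split the segment integrals at ε
    set Cε : ℂ := ∫ y in (0:ℝ)..γ,
        Complex.exp ((y : ℂ) * Complex.I) * f ((ε : ℂ) * Complex.exp ((y : ℂ) * Complex.I))
      with hCε
    have hii1a : IntervalIntegrable (fun t : ℝ => f (t : ℂ)) volume 0 ε :=
      (hcont1.mono (by rw [uIcc_of_le hε.le]; exact Icc_subset_Icc le_rfl hεR.le)).intervalIntegrable
    have hii1b : IntervalIntegrable (fun t : ℝ => f (t : ℂ)) volume ε R :=
      (hcont1.mono (by rw [uIcc_of_le hεR.le]; exact Icc_subset_Icc hε.le le_rfl)).intervalIntegrable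
    have hii2a : IntervalIntegrable (fun t : ℝ => f ((t : ℂ) * E)) volume 0 ε :=
      (hcont2.mono (by rw [uIcc_of_le hε.le]; exact Icc_subset_Icc le_rfl hεR.le)).intervalIntegrable
    have hii2b : IntervalIntegrable (fun t : ℝ => f ((t : ℂ) * E)) volume ε R :=
      (hcont2.mono (by rw [uIcc_of_le hεR.le]; exact Icc_subset_Icc hε.le le_rfl)).intervalIntegrable
    have hsplit1 : (∫ t in (0:ℝ)..R, f (t : ℂ))
        = (∫ t in (0:ℝ)..ε, f (t : ℂ)) + ∫ t in ε..R, f (t : ℂ) :=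
      (intervalIntegral.integral_add_adjacent_intervals hii1a hii1b).symm
    have hsplit2 : (∫ t in (0:ℝ)..R, f ((t : ℂ) * E))
        = (∫ t in (0:ℝ)..ε, f ((t : ℂ) * E)) + ∫ t in ε..R, f ((t : ℂ) * E) :=
      (intervalIntegral.integral_add_adjacent_intervals hii2a hii2b).symm
    have hDeq : D = (∫ t in (0:ℝ)..ε, f (t : ℂ)) - E * (∫ t in (0:ℝ)..ε, f ((t : ℂ) * E))
        + Complex.I * (ε : ℂ) * Cε := by
      rw [hDdef, hsplit1, hsplit2]
      have h2 : (∫ t in ε..R, f (t : ℂ))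
          = E * (∫ t in ε..R, f ((t : ℂ) * E)) - Complex.I * ((R : ℂ) * Carc)
            + Complex.I * ((ε : ℂ) * Cε) := by linear_combination hrect0
      rw [mul_add]
      linear_combination h2
    -- bounds
    have hb1 : ‖∫ t in (0:ℝ)..ε, f (t : ℂ)‖ ≤ M * ε := by
      have := intervalIntegral.norm_integral_le_of_norm_le_const
        (a := 0) (b := ε) (C := M) (f := fun t : ℝ => f (t : ℂ)) ?_
      · simpa [_root_.abs_of_nonneg hε.le] using this
      · intro x hx
        rw [uIoc_of_le hε.le] at hx
        exact hM _ (by simpa using hmemK x 0 hx.1.le (hx.2.trans hεR.le) le_rfl hγ0.le)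
    have hb2 : ‖∫ t in (0:ℝ)..ε, f ((t : ℂ) * E)‖ ≤ M * ε := by
      have := intervalIntegral.norm_integral_le_of_norm_le_const
        (a := 0) (b := ε) (C := M) (f := fun t : ℝ => f ((t : ℂ) * E)) ?_
      · simpa [_root_.abs_of_nonneg hε.le] using this
      · intro x hx
        rw [uIoc_of_le hε.le] at hx
        exact hM _ (hmemK x γ hx.1.le (hx.2.trans hεR.le) hγ0.le le_rfl)
    have hb3 : ‖Cε‖ ≤ M * γ := by
      have := intervalIntegral.norm_integral_le_of_norm_le_const
        (a := 0) (b := γ) (C := M) (f := fun y : ℝ =>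
          Complex.exp ((y : ℂ) * Complex.I) * f ((ε : ℂ) * Complex.exp ((y : ℂ) * Complex.I))) ?_
      · simpa [hCε, _root_.abs_of_nonneg hγ0.le] using this
      · intro y hy
        rw [uIoc_of_le hγ0.le] at hy
        have h1 : ‖Complex.exp ((y : ℂ) * Complex.I)‖ = 1 := by
          simpa using Complex.norm_exp_ofReal_mul_I y
        rw [norm_mul, h1, one_mul]
        exact hM _ (hmemK ε y hε.le hεR.le hy.1.le hy.2)
    calc ‖D‖ ≤ ‖(∫ t in (0:ℝ)..ε, f (t : ℂ)) - E * (∫ t in (0:ℝ)..ε, f ((t : ℂ) * E))‖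
          + ‖Complex.I * (ε : ℂ) * Cε‖ := by rw [hDeq]; exact norm_add_le _ _
      _ ≤ (‖(∫ t in (0:ℝ)..ε, f (t : ℂ))‖ + ‖E * (∫ t in (0:ℝ)..ε, f ((t : ℂ) * E))‖)
          + ‖Complex.I * (ε : ℂ) * Cε‖ := by gcongr; exact norm_sub_le _ _
      _ ≤ (M * ε + 1 * (M * ε)) + 1 * ε * (M * γ) := by
          have e1 : ‖E * ∫ t in (0:ℝ)..ε, f ((t : ℂ) * E)‖ ≤ 1 * (M * ε) := by
            rw [norm_mul, hEnorm]
            simpa using hb2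
          have e2 : ‖Complex.I * (ε : ℂ) * Cε‖ ≤ 1 * ε * (M * γ) := by
            rw [norm_mul, norm_mul, Complex.norm_I, Complex.norm_real,
              Real.norm_of_nonneg hε.le]
            exact mul_le_mul_of_nonneg_left hb3 (by positivity)
          exact add_le_add (add_le_add hb1 e1) e2
      _ = ε * (2 * M + γ * M) := by ring
  -- Let ε → 0
  have hten : Tendsto (fun ε : ℝ => ε * (2 * M + γ * M)) (nhdsWithin 0 (Ioi 0)) (nhds 0) := by
    have : Tendsto (fun ε : ℝ => ε * (2 * M + γ * M)) (nhds 0) (nhds 0) := by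
      simpa using (continuous_mul_const (2 * M + γ * M)).tendsto 0
    exact this.mono_left nhdsWithin_le_nhds
  have hDnorm : ‖D‖ ≤ 0 := by
    refine ge_of_tendsto hten ?_
    filter_upwards [Ioo_mem_nhdsGT_of_mem (Set.mem_Ico.2 ⟨le_rfl, hR⟩)] with ε hε
    exact key ε hε.1 hε.2
  have hD0 : D = 0 := by
    simpa using norm_le_zero_iff.1 hDnorm
  have := sub_eq_zero.1 hD0
  simpa [hDdef, hEdef, hCarc] using this
end

section
/- Let 0 < γ < π/2 and let f : ℂ → ℂ be complex differentiable on an open set containing the infinite closed sector {r·e^{iθ} : r ≥ 0, 0 ≤ θ ≤ γ}. Assume that R · sup{|f(R·e^{iθ})| : θ ∈ [0,γ]} tends to 0 as R → ∞, and that t ↦ f(t) and t ↦ f(t·e^{iγ}) are both Lebesgue integrable on [0,∞). Then ∫₀^∞ f(t) dt = e^{iγ} · ∫₀^∞ f(t·e^{iγ}) dt. -/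
open MeasureTheory Filter

/-- Change of variables `t = exp x` for integrals over `(0, ∞)`. -/
lemma cov_exp_integral (h : ℝ → ℂ) :
    ∫ t in Set.Ioi (0:ℝ), h t = ∫ x : ℝ, Real.exp x • h (Real.exp x) := by
  have key := integral_image_eq_integral_abs_deriv_smul (MeasurableSet.univ)
    (fun x _ => (Real.hasDerivAt_exp x).hasDerivWithinAt) (Real.exp_injective.injOn) h
  rw [Set.image_univ, Real.range_exp] at key
  rw [key, MeasureTheory.setIntegral_univ]
  simp [Real.abs_exp]

/-- Change of variables `t = exp x` for integrability over `(0, ∞)`. -/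
lemma cov_exp_integrable (h : ℝ → ℂ) (hi : MeasureTheory.IntegrableOn h (Set.Ioi 0)) :
    MeasureTheory.Integrable (fun x : ℝ => Real.exp x • h (Real.exp x)) := by
  have key := MeasureTheory.integrableOn_image_iff_integrableOn_abs_deriv_smul
    (MeasurableSet.univ)
    (fun x _ => (Real.hasDerivAt_exp x).hasDerivWithinAt) (Real.exp_injective.injOn) h
  rw [Set.image_univ, Real.range_exp] at key
  have h2 := key.mp hi
  rw [MeasureTheory.integrableOn_univ] at h2
  simpa [Real.abs_exp] using h2

/-- **Rotation of the half-line integration contour into the complex plane.**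
For `0 < γ < π/2` and `f` complex differentiable on an open set containing the infinite
closed sector `{r·e^{iθ} : r ≥ 0, 0 ≤ θ ≤ γ}`, if `R · sup_{θ ∈ [0,γ]} |f(R·e^{iθ})| → 0`
as `R → ∞` and both `t ↦ f(t)` and `t ↦ f(t·e^{iγ})` are integrable on `[0,∞)`, then
`∫₀^∞ f(t) dt = e^{iγ} · ∫₀^∞ f(t·e^{iγ}) dt`. -/
theorem halfline_contour_rotation (γ : ℝ) (hγ0 : 0 < γ) (hγ : γ < Real.pi / 2)
    (f : ℂ → ℂ)
    (hf : ∃ U : Set ℂ, IsOpen U ∧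
      {z : ℂ | ∃ r θ : ℝ, 0 ≤ r ∧ 0 ≤ θ ∧ θ ≤ γ ∧
        z = (r : ℂ) * Complex.exp ((θ : ℂ) * Complex.I)} ⊆ U ∧
      DifferentiableOn ℂ f U)
    (hdecay : Tendsto
      (fun R : ℝ => R * ⨆ θ : Set.Icc (0:ℝ) γ,
        ‖f ((R : ℂ) * Complex.exp (((θ : ℝ) : ℂ) * Complex.I))‖)
      atTop (nhds 0))
    (hint₁ : IntegrableOn (fun t : ℝ => f (t : ℂ)) (Set.Ici 0))
    (hint₂ : IntegrableOn
      (fun t : ℝ => f ((t : ℂ) * Complex.exp ((γ : ℂ) * Complex.I))) (Set.Ici 0)) :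
    ∫ t in Set.Ioi (0:ℝ), f (t : ℂ) =
      Complex.exp ((γ : ℂ) * Complex.I) *
        ∫ t in Set.Ioi (0:ℝ), f ((t : ℂ) * Complex.exp ((γ : ℂ) * Complex.I)) := by
  obtain ⟨U, hUo, hUs, hfd⟩ := hf
  have hγ0' : (0:ℝ) ≤ γ := hγ0.le
  have hmem : ∀ r θ : ℝ, 0 ≤ r → 0 ≤ θ → θ ≤ γ →
      ((r:ℂ) * Complex.exp ((θ:ℂ) * Complex.I)) ∈ U :=
    fun r θ hr h0 h1 => hUs ⟨r, θ, hr, h0, h1, rfl⟩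
  set g : ℂ → ℂ := fun w => Complex.exp w * f (Complex.exp w) with hg_def
  have hexp_eq : ∀ w : ℂ, Complex.exp w =
      ((Real.exp w.re : ℝ) : ℂ) * Complex.exp ((w.im : ℂ) * Complex.I) := by
    intro w
    rw [Complex.ofReal_exp]
    rw [← Complex.exp_add]
    congr 1
    exact (Complex.re_add_im w).symm
  have hexp_mem : ∀ w : ℂ, 0 ≤ w.im → w.im ≤ γ → Complex.exp w ∈ U := by
    intro w h0 h1
    rw [hexp_eq w]
    exact hmem _ _ (Real.exp_pos _).le h0 h1
  have hg_diff : DifferentiableOn ℂ g (Complex.exp ⁻¹' U) := by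
    apply DifferentiableOn.mul
    · exact Complex.differentiable_exp.differentiableOn
    · exact hfd.comp Complex.differentiable_exp.differentiableOn
        (Set.mapsTo_preimage _ _)
  have hc : ContinuousOn f U := hfd.continuousOn
  -- the sup function
  set M : ℝ → ℝ := fun R => ⨆ θ : Set.Icc (0:ℝ) γ,
      ‖f ((R : ℂ) * Complex.exp (((θ : ℝ) : ℂ) * Complex.I))‖ with hM_def
  have harc : ∀ R : ℝ, 0 ≤ R → ∀ y ∈ Set.Icc (0:ℝ) γ,
      ‖f ((R:ℂ) * Complex.exp ((y:ℂ) * Complex.I))‖ ≤ M R := by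
    intro R hR y hy
    have hcont : Continuous fun θ : Set.Icc (0:ℝ) γ =>
        ‖f ((R : ℂ) * Complex.exp (((θ : ℝ) : ℂ) * Complex.I))‖ := by
      apply continuous_norm.comp
      apply hc.comp_continuous
      · exact continuous_const.mul (Complex.continuous_exp.comp
          ((Complex.continuous_ofReal.comp continuous_subtype_val).mul continuous_const))
      · intro θ; exact hmem R θ hR θ.2.1 θ.2.2
    have hbdd : BddAbove (Set.range fun θ : Set.Icc (0:ℝ) γ =>
        ‖f ((R : ℂ) * Complex.exp (((θ : ℝ) : ℂ) * Complex.I))‖) :=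
      (isCompact_range hcont).bddAbove
    exact le_ciSup hbdd (⟨y, hy⟩ : Set.Icc (0:ℝ) γ)
  -- bound near the origin
  set K : Set ℂ := (fun p : ℝ × ℝ => (p.1:ℂ) * Complex.exp ((p.2:ℂ) * Complex.I)) ''
      (Set.Icc (0:ℝ) 1 ×ˢ Set.Icc (0:ℝ) γ) with hK_def
  have hK_comp : IsCompact K := by
    apply (isCompact_Icc.prod isCompact_Icc).image
    exact (Complex.continuous_ofReal.comp continuous_fst).mul
      (Complex.continuous_exp.comp
        ((Complex.continuous_ofReal.comp continuous_snd).mul continuous_const))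
  have hKU : K ⊆ U := by
    rintro z ⟨⟨r, θ⟩, ⟨hr, hθ⟩, rfl⟩
    exact hmem r θ hr.1 hθ.1 hθ.2
  obtain ⟨C, hC⟩ := hK_comp.exists_bound_of_continuousOn (hc.mono hKU)
  -- the four-sided rectangle identity
  have key : ∀ b : ℝ,
      (∫ x in (-b)..b, g (x : ℂ)) - (∫ x in (-b)..b, g ((x:ℂ) + (γ:ℂ) * Complex.I))
        + Complex.I • (∫ y in (0:ℝ)..γ, g ((b:ℂ) + (y:ℂ) * Complex.I))
        - Complex.I • (∫ y in (0:ℝ)..γ, g (((-b : ℝ) :ℂ) + (y:ℂ) * Complex.I)) = 0 := by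
    intro b
    have H : DifferentiableOn ℂ g
        (Set.uIcc (((-b:ℝ):ℂ)).re (((b:ℂ) + (γ:ℂ)*Complex.I)).re ×ℂ
          Set.uIcc (((-b:ℝ):ℂ)).im (((b:ℂ) + (γ:ℂ)*Complex.I)).im) := by
      apply hg_diff.mono
      intro w hw
      rw [Complex.mem_reProdIm] at hw
      have h2 := hw.2
      simp only [Complex.add_im, Complex.ofReal_im, Complex.mul_I_im, Complex.ofReal_re,
        zero_add] at h2
      rw [Set.uIcc_of_le hγ0'] at h2
      exact hexp_mem w h2.1 h2.2
    have := Complex.integral_boundary_rect_eq_zero_of_differentiableOn g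
      (((-b:ℝ)):ℂ) ((b:ℂ) + (γ:ℂ) * Complex.I) H
    simpa only [Complex.add_re, Complex.add_im, Complex.ofReal_re, Complex.ofReal_im,
      Complex.mul_I_re, Complex.mul_I_im, zero_add, add_zero, neg_zero,
      Complex.ofReal_zero, zero_mul] using this
  -- limits of the vertical sides
  have hdec2 : Tendsto (fun b : ℝ => Real.exp b * M (Real.exp b)) atTop (nhds 0) :=
    hdecay.comp Real.tendsto_exp_atTop
  have hE : Tendsto (fun b : ℝ => ∫ y in (0:ℝ)..γ, g ((b:ℂ) + (y:ℂ) * Complex.I))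
      atTop (nhds 0) := by
    apply squeeze_zero_norm (a := fun b => (Real.exp b * M (Real.exp b)) * |γ - 0|)
    · intro b
      apply intervalIntegral.norm_integral_le_of_norm_le_const
      intro y hy
      rw [Set.uIoc_of_le hγ0'] at hy
      have hy' : y ∈ Set.Icc (0:ℝ) γ := ⟨hy.1.le, hy.2⟩
      have hval : g ((b:ℂ) + (y:ℂ) * Complex.I) =
          ((Real.exp b : ℝ):ℂ) * Complex.exp ((y:ℂ) * Complex.I) *
            f (((Real.exp b : ℝ):ℂ) * Complex.exp ((y:ℂ) * Complex.I)) := by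
        have : Complex.exp ((b:ℂ) + (y:ℂ) * Complex.I) =
            ((Real.exp b : ℝ):ℂ) * Complex.exp ((y:ℂ) * Complex.I) := by
          rw [Complex.exp_add, Complex.ofReal_exp]
        simp only [hg_def, this]
      rw [hval]
      rw [norm_mul, norm_mul]
      simp only [Complex.norm_real, Real.norm_eq_abs, Real.abs_exp,
        Complex.norm_exp_ofReal_mul_I, mul_one]
      exact mul_le_mul_of_nonneg_left (harc _ (Real.exp_pos b).le y hy')
        (Real.exp_pos b).le
    · simpa using hdec2.mul_const (|γ - 0|)
  have hD : Tendsto (fun b : ℝ => ∫ y in (0:ℝ)..γ, g (((-b : ℝ):ℂ) + (y:ℂ) * Complex.I))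
      atTop (nhds 0) := by
    apply squeeze_zero_norm' (a := fun b => (Real.exp (-b) * C) * |γ - 0|)
    · filter_upwards [eventually_ge_atTop (0:ℝ)] with b hb
      apply intervalIntegral.norm_integral_le_of_norm_le_const
      intro y hy
      rw [Set.uIoc_of_le hγ0'] at hy
      have hy' : y ∈ Set.Icc (0:ℝ) γ := ⟨hy.1.le, hy.2⟩
      have hval : g (((-b : ℝ):ℂ) + (y:ℂ) * Complex.I) =
          ((Real.exp (-b) : ℝ):ℂ) * Complex.exp ((y:ℂ) * Complex.I) *
            f (((Real.exp (-b) : ℝ):ℂ) * Complex.exp ((y:ℂ) * Complex.I)) := by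
        have : Complex.exp (((-b : ℝ):ℂ) + (y:ℂ) * Complex.I) =
            ((Real.exp (-b) : ℝ):ℂ) * Complex.exp ((y:ℂ) * Complex.I) := by
          rw [Complex.exp_add, Complex.ofReal_exp]
        simp only [hg_def, this]
      rw [hval]
      rw [norm_mul, norm_mul]
      simp only [Complex.norm_real, Real.norm_eq_abs, Real.abs_exp,
        Complex.norm_exp_ofReal_mul_I, mul_one]
      have hmemK : ((Real.exp (-b) : ℝ):ℂ) * Complex.exp ((y:ℂ) * Complex.I) ∈ K := by
        refine ⟨(Real.exp (-b), y), ⟨⟨(Real.exp_pos _).le, ?_⟩, hy'⟩, rfl⟩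
        exact Real.exp_le_one_iff.mpr (neg_nonpos.mpr hb)
      have := hC _ hmemK
      exact mul_le_mul_of_nonneg_left this (Real.exp_pos _).le
    · have h1 : Tendsto (fun b : ℝ => Real.exp (-b)) atTop (nhds 0) := by
        exact Real.tendsto_exp_atBot.comp tendsto_neg_atTop_atBot
      simpa using (h1.mul_const C).mul_const (|γ - 0|)
  -- integrability of g along the two horizontal lines
  have hint1' : Integrable (fun x : ℝ => g (x:ℂ)) := by
    have h0 := cov_exp_integrable (fun t : ℝ => f (t:ℂ))
      (hint₁.mono_set Set.Ioi_subset_Ici_self)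
    have heq : (fun x : ℝ => Real.exp x • f (((Real.exp x : ℝ)):ℂ)) =
        fun x : ℝ => g (x:ℂ) := by
      funext x
      simp only [hg_def, Complex.real_smul, Complex.ofReal_exp]
    rwa [heq] at h0
  have hint2' : Integrable (fun x : ℝ => g ((x:ℂ) + (γ:ℂ) * Complex.I)) := by
    have h0 := cov_exp_integrable (fun t : ℝ => f ((t:ℂ) * Complex.exp ((γ:ℂ) * Complex.I)))
      (hint₂.mono_set Set.Ioi_subset_Ici_self)
    have h1 := h0.const_mul (Complex.exp ((γ:ℂ) * Complex.I))
    have heq : (fun x : ℝ => Complex.exp ((γ:ℂ) * Complex.I) *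
        (Real.exp x • f (((Real.exp x : ℝ):ℂ) * Complex.exp ((γ:ℂ) * Complex.I)))) =
        fun x : ℝ => g ((x:ℂ) + (γ:ℂ) * Complex.I) := by
      funext x
      have : Complex.exp ((x:ℂ) + (γ:ℂ) * Complex.I) =
          ((Real.exp x : ℝ):ℂ) * Complex.exp ((γ:ℂ) * Complex.I) := by
        rw [Complex.exp_add, Complex.ofReal_exp]
      simp only [hg_def, this, Complex.real_smul]
      ring
    rwa [heq] at h1
  -- limits of the horizontal sides
  have hA : Tendsto (fun b : ℝ => ∫ x in (-b)..b, g (x:ℂ)) atTop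
      (nhds (∫ x : ℝ, g (x:ℂ))) :=
    intervalIntegral_tendsto_integral hint1' tendsto_neg_atTop_atBot tendsto_id
  have hB : Tendsto (fun b : ℝ => ∫ x in (-b)..b, g ((x:ℂ) + (γ:ℂ) * Complex.I)) atTop
      (nhds (∫ x : ℝ, g ((x:ℂ) + (γ:ℂ) * Complex.I))) :=
    intervalIntegral_tendsto_integral hint2' tendsto_neg_atTop_atBot tendsto_id
  -- conclude equality of the two full-line integrals
  have hmain : (∫ x : ℝ, g (x:ℂ)) = ∫ x : ℝ, g ((x:ℂ) + (γ:ℂ) * Complex.I) := by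
    have hLHS : Tendsto (fun b : ℝ => (∫ x in (-b)..b, g (x:ℂ)) -
        (∫ x in (-b)..b, g ((x:ℂ) + (γ:ℂ) * Complex.I))) atTop
        (nhds ((∫ x : ℝ, g (x:ℂ)) - ∫ x : ℝ, g ((x:ℂ) + (γ:ℂ) * Complex.I))) := hA.sub hB
    have hRHS : Tendsto (fun b : ℝ => (∫ x in (-b)..b, g (x:ℂ)) -
        (∫ x in (-b)..b, g ((x:ℂ) + (γ:ℂ) * Complex.I))) atTop (nhds 0) := by
      have heq : (fun b : ℝ => (∫ x in (-b)..b, g (x:ℂ)) -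
          (∫ x in (-b)..b, g ((x:ℂ) + (γ:ℂ) * Complex.I))) =
          fun b : ℝ => Complex.I • (∫ y in (0:ℝ)..γ, g (((-b : ℝ):ℂ) + (y:ℂ) * Complex.I))
            - Complex.I • (∫ y in (0:ℝ)..γ, g ((b:ℂ) + (y:ℂ) * Complex.I)) := by
        funext b
        have := key b
        linear_combination this
      rw [heq]
      have := (hD.const_smul Complex.I).sub (hE.const_smul Complex.I)
      simpa using this
    have := tendsto_nhds_unique hLHS hRHS
    exact sub_eq_zero.mp this
  -- final conversion back to the half-line integrals
  have cov1 : (∫ t in Set.Ioi (0:ℝ), f (t:ℂ)) = ∫ x : ℝ, g (x:ℂ) := by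
    rw [cov_exp_integral (fun t : ℝ => f (t:ℂ))]
    congr 1; funext x
    simp only [hg_def, Complex.real_smul, Complex.ofReal_exp]
  have cov2 : (∫ x : ℝ, g ((x:ℂ) + (γ:ℂ) * Complex.I)) =
      Complex.exp ((γ:ℂ) * Complex.I) *
        ∫ t in Set.Ioi (0:ℝ), f ((t:ℂ) * Complex.exp ((γ:ℂ) * Complex.I)) := by
    rw [cov_exp_integral (fun t : ℝ => f ((t:ℂ) * Complex.exp ((γ:ℂ) * Complex.I)))]
    rw [← MeasureTheory.integral_const_mul]
    congr 1; funext x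
    have hexp : Complex.exp ((x:ℂ) + (γ:ℂ) * Complex.I) =
        ((Real.exp x : ℝ):ℂ) * Complex.exp ((γ:ℂ) * Complex.I) := by
      rw [Complex.exp_add, Complex.ofReal_exp]
    simp only [hg_def, hexp, Complex.real_smul]
    ring
  rw [cov1, hmain, cov2]
end

section
/- Let k ∈ ℝ and let g : ℝ³ → ℂ be continuous with compact support. Define u(x) = ∫_{ℝ³} (e^{ik‖x−y‖} / (4π‖x−y‖)) · g(y) dy. Then for every unit vector α ∈ ℝ³, the limit as ρ → ∞ of 4π·ρ·e^{−ikρ} · u(ρ·α) equals F(α) := ∫_{ℝ³} e^{−ik⟪α,y⟫} · g(y) dy. -/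
open Filter MeasureTheory
open scoped Topology

open Filter MeasureTheory

lemma norm_exp_I_mul_real (a : ℝ) : ‖Complex.exp (Complex.I * a)‖ = 1 := by
  rw [Complex.norm_exp]
  simp

lemma aux_n (α y : EuclideanSpace ℝ (Fin 3)) (hα : ‖α‖ = 1) :
    Tendsto (fun ρ : ℝ => ‖α - ρ⁻¹ • y‖) atTop (nhds 1) := by
  have h0 : Tendsto (fun ρ : ℝ => α - ρ⁻¹ • y) atTop (nhds α) := by
    have h1 : Tendsto (fun ρ : ℝ => ρ⁻¹ • y) atTop (nhds ((0:ℝ) • y)) :=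
      tendsto_inv_atTop_zero.smul_const y
    simpa using tendsto_const_nhds.sub h1
  simpa [hα] using h0.norm

lemma aux_norm_eq (α y : EuclideanSpace ℝ (Fin 3)) {ρ : ℝ} (hρ : 0 < ρ) :
    ‖ρ • α - y‖ = ρ * ‖α - ρ⁻¹ • y‖ := by
  rw [show ρ • α - y = ρ • (α - ρ⁻¹ • y) by rw [smul_sub, smul_inv_smul₀ hρ.ne']]
  rw [norm_smul, Real.norm_eq_abs, abs_of_pos hρ]

lemma aux_phase (α y : EuclideanSpace ℝ (Fin 3)) (hα : ‖α‖ = 1) :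
    Tendsto (fun ρ : ℝ => ‖ρ • α - y‖ - ρ) atTop (nhds (-(inner ℝ α y : ℝ))) := by
  set t : ℝ := inner ℝ α y with ht
  have hmain : Tendsto (fun ρ : ℝ => (-2*t + ‖y‖^2 * ρ⁻¹) / (‖α - ρ⁻¹ • y‖ + 1))
      atTop (nhds (-t)) := by
    have hnum : Tendsto (fun ρ : ℝ => -2*t + ‖y‖^2 * ρ⁻¹) atTop (nhds (-2*t + ‖y‖^2 * 0)) :=
      tendsto_const_nhds.add (tendsto_inv_atTop_zero.const_mul _)
    have hden : Tendsto (fun ρ : ℝ => ‖α - ρ⁻¹ • y‖ + 1) atTop (nhds (1 + 1)) :=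
      (aux_n α y hα).add tendsto_const_nhds
    have := hnum.div hden (by norm_num)
    convert this using 2
    · rfl
    · ring
  refine hmain.congr' ?_
  filter_upwards [eventually_gt_atTop (0:ℝ)] with ρ hρ
  have hn2 : ‖α - ρ⁻¹ • y‖^2 = 1 - 2*t*ρ⁻¹ + ‖y‖^2 * ρ⁻¹^2 := by
    rw [norm_sub_sq_real, hα, real_inner_smul_right, norm_smul, Real.norm_eq_abs,
      abs_of_pos (inv_pos.2 hρ)]
    ring
  have hn2' : ρ * ‖α - ρ⁻¹ • y‖^2 = ρ - 2*t + ‖y‖^2 * ρ⁻¹ := by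
    rw [hn2]; field_simp
  have hd : ‖α - ρ⁻¹ • y‖ + 1 ≠ 0 := by positivity
  rw [aux_norm_eq α y hρ, div_eq_iff hd]
  linear_combination -hn2'

lemma aux_ratio (α y : EuclideanSpace ℝ (Fin 3)) (hα : ‖α‖ = 1) :
    Tendsto (fun ρ : ℝ => ρ / ‖ρ • α - y‖) atTop (nhds 1) := by
  have h1 : Tendsto (fun ρ : ℝ => (‖α - ρ⁻¹ • y‖)⁻¹) atTop (nhds 1) := by
    simpa using (aux_n α y hα).inv₀ one_ne_zero
  refine h1.congr' ?_
  filter_upwards [eventually_gt_atTop (max ‖y‖ 0)] with ρ hρ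
  have hρ0 : 0 < ρ := lt_of_le_of_lt (le_max_right _ _) hρ
  have hd : 0 < ‖ρ • α - y‖ := by
    have : ‖y‖ < ρ := lt_of_le_of_lt (le_max_left _ _) hρ
    have h2 : ρ - ‖y‖ ≤ ‖ρ • α - y‖ := by
      have := norm_sub_norm_le (ρ • α) y
      rw [norm_smul, Real.norm_eq_abs, abs_of_pos hρ0, hα, mul_one] at this
      linarith
    linarith
  have hn0 : ‖α - ρ⁻¹ • y‖ ≠ 0 := by
    intro h
    rw [aux_norm_eq α y hρ0, h, mul_zero] at hd
    exact lt_irrefl 0 hd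
  rw [aux_norm_eq α y hρ0, div_mul_eq_div_div, div_self hρ0.ne', one_div]


/-- **Far field map of the 3D Helmholtz volume potential.**
Let `g : ℝ³ → ℂ` be continuous with compact support and let
`u(x) = ∫ (e^{ik‖x−y‖}/(4π‖x−y‖))·g(y) dy` be the outgoing volume potential.
Then for every unit vector `α`, `4π·ρ·e^{−ikρ}·u(ρ·α) → F(α) = ∫ e^{−ik⟪α,y⟫}·g(y) dy`
as `ρ → ∞`. -/
theorem farfield_map_of_volume_potential (k : ℝ) (g : EuclideanSpace ℝ (Fin 3) → ℂ)
    (hg : Continuous g) (hgsupp : HasCompactSupport g)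
    (u : EuclideanSpace ℝ (Fin 3) → ℂ)
    (hu : ∀ x : EuclideanSpace ℝ (Fin 3),
      u x = ∫ y : EuclideanSpace ℝ (Fin 3),
        (Complex.exp (Complex.I * (k : ℂ) * (‖x - y‖ : ℂ)) /
          (4 * (Real.pi : ℂ) * (‖x - y‖ : ℂ))) * g y)
    (α : EuclideanSpace ℝ (Fin 3)) (hα : ‖α‖ = 1) :
    Tendsto
      (fun ρ : ℝ =>
        (4 * (Real.pi : ℂ) * (ρ : ℂ)) * Complex.exp (-(Complex.I * (k : ℂ) * (ρ : ℂ))) *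
          u (ρ • α))
      atTop
      (nhds (∫ y : EuclideanSpace ℝ (Fin 3),
        Complex.exp (-(Complex.I * (k : ℂ) * ((inner ℝ α y : ℝ) : ℂ))) * g y)) := by
  set c : ℝ → ℂ := fun ρ =>
    (4 * (Real.pi : ℂ) * (ρ : ℂ)) * Complex.exp (-(Complex.I * (k : ℂ) * (ρ : ℂ))) with hc
  set F : ℝ → EuclideanSpace ℝ (Fin 3) → ℂ := fun ρ y =>
    c ρ * ((Complex.exp (Complex.I * (k : ℂ) * (‖ρ • α - y‖ : ℂ)) /
      (4 * (Real.pi : ℂ) * (‖ρ • α - y‖ : ℂ))) * g y) with hF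
  have key : Tendsto (fun ρ : ℝ => ∫ y, F ρ y) atTop
      (nhds (∫ y : EuclideanSpace ℝ (Fin 3),
        Complex.exp (-(Complex.I * (k : ℂ) * ((inner ℝ α y : ℝ) : ℂ))) * g y)) := by
    obtain ⟨R, hR0, hR⟩ := hgsupp.isBounded.subset_closedBall_lt 0 0
    have hgi : Integrable g := hg.integrable_of_hasCompactSupport hgsupp
    apply tendsto_integral_filter_of_dominated_convergence (fun y => 2 * ‖g y‖)
    · -- measurability
      filter_upwards with ρ
      have hm1 : Measurable fun y : EuclideanSpace ℝ (Fin 3) => ((‖ρ • α - y‖ : ℝ) : ℂ) :=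
        (Complex.continuous_ofReal.comp (continuous_const.sub continuous_id).norm).measurable
      exact ((measurable_const.mul
        (((Complex.measurable_exp.comp (hm1.const_mul _)).div (hm1.const_mul _)).mul
          hg.measurable))).aestronglyMeasurable
    · -- domination
      filter_upwards [eventually_ge_atTop (2 * R)] with ρ hρ
      have hρ0 : 0 < ρ := by linarith
      refine Eventually.of_forall fun y => ?_
      by_cases hgy : g y = 0
      · simp [hF, hgy]
      · have hy : ‖y‖ ≤ R := by
          have : y ∈ tsupport g := subset_tsupport g hgy
          simpa using hR this
        have hd : ρ - R ≤ ‖ρ • α - y‖ := by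
          have := norm_sub_norm_le (ρ • α) y
          rw [norm_smul, Real.norm_eq_abs, abs_of_pos hρ0, hα, mul_one] at this
          linarith
        have hdpos : 0 < ‖ρ • α - y‖ := by linarith
        have he1 : ‖Complex.exp (-(Complex.I * (k : ℂ) * (ρ : ℂ)))‖ = 1 := by
          have : (-(Complex.I * (k : ℂ) * (ρ : ℂ))) = Complex.I * ((-(k * ρ) : ℝ) : ℂ) := by
            push_cast; ring
          rw [this, norm_exp_I_mul_real]
        have he2 : ‖Complex.exp (Complex.I * (k : ℂ) * (‖ρ • α - y‖ : ℂ))‖ = 1 := by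
          have : (Complex.I * (k : ℂ) * (‖ρ • α - y‖ : ℂ))
              = Complex.I * ((k * ‖ρ • α - y‖ : ℝ) : ℂ) := by push_cast; ring
          rw [this, norm_exp_I_mul_real]
        have hnorm : ‖F ρ y‖ = (ρ / ‖ρ • α - y‖) * ‖g y‖ := by
          have hπ0 : Real.pi ≠ 0 := Real.pi_ne_zero
          simp only [hF, hc, norm_mul, norm_div, he1, he2, mul_one, one_mul,
            Complex.norm_real, Real.norm_eq_abs, abs_of_pos Real.pi_pos,
            abs_of_pos hρ0, abs_of_pos hdpos]
          norm_num
          field_simp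
        rw [hnorm]
        have hr2 : ρ / ‖ρ • α - y‖ ≤ 2 := by
          rw [div_le_iff₀ hdpos]
          linarith
        have := mul_le_mul_of_nonneg_right hr2 (norm_nonneg (g y))
        linarith
    · exact (hgi.norm.const_mul 2)
    · -- pointwise limit
      refine Eventually.of_forall fun y => ?_
      set t : ℝ := inner ℝ α y with ht
      have T1 : Tendsto (fun ρ : ℝ => (((ρ / ‖ρ • α - y‖ : ℝ)) : ℂ)) atTop (nhds 1) := by
        exact (Complex.continuous_ofReal.tendsto 1).comp (aux_ratio α y hα)
      have T2 : Tendsto (fun ρ : ℝ =>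
          Complex.exp (Complex.I * (k : ℂ) * ((‖ρ • α - y‖ - ρ : ℝ) : ℂ))) atTop
          (nhds (Complex.exp (-(Complex.I * (k : ℂ) * ((t : ℝ) : ℂ))))) := by
        have h1 : Tendsto (fun ρ : ℝ => ((‖ρ • α - y‖ - ρ : ℝ) : ℂ)) atTop
            (nhds (((-t : ℝ) : ℂ))) :=
          (Complex.continuous_ofReal.tendsto _).comp (aux_phase α y hα)
        have h2 := ((tendsto_const_nhds (x := Complex.I * (k:ℂ))).mul h1)
        have h3 := (Complex.continuous_exp.tendsto _).comp h2
        convert h3 using 2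
        · rfl
        · push_cast; ring
      have TG : Tendsto (fun ρ : ℝ =>
          (((ρ / ‖ρ • α - y‖ : ℝ)) : ℂ) *
            Complex.exp (Complex.I * (k : ℂ) * ((‖ρ • α - y‖ - ρ : ℝ) : ℂ)) * g y) atTop
          (nhds (Complex.exp (-(Complex.I * (k : ℂ) * ((t : ℝ) : ℂ))) * g y)) := by
        have := (T1.mul T2).mul (tendsto_const_nhds (x := g y))
        simpa using this
      refine Tendsto.congr' ?_ TG
      filter_upwards [eventually_gt_atTop (max ‖y‖ 0)] with ρ hρ
      have hρ0 : 0 < ρ := lt_of_le_of_lt (le_max_right _ _) hρ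
      have hdpos : 0 < ‖ρ • α - y‖ := by
        have hylt : ‖y‖ < ρ := lt_of_le_of_lt (le_max_left _ _) hρ
        have := norm_sub_norm_le (ρ • α) y
        rw [norm_smul, Real.norm_eq_abs, abs_of_pos hρ0, hα, mul_one] at this
        linarith
      have hdc : ((‖ρ • α - y‖ : ℝ) : ℂ) ≠ 0 := by
        exact_mod_cast hdpos.ne'
      have hπ : (Real.pi : ℂ) ≠ 0 := by exact_mod_cast Real.pi_ne_zero
      have hexp : Complex.exp (Complex.I * (k : ℂ) * ((‖ρ • α - y‖ - ρ : ℝ) : ℂ))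
          = Complex.exp (Complex.I * (k : ℂ) * (‖ρ • α - y‖ : ℂ)) *
            Complex.exp (-(Complex.I * (k : ℂ) * (ρ : ℂ))) := by
        rw [← Complex.exp_add]
        congr 1
        push_cast; ring
      simp only [hF, hc]
      rw [hexp]
      push_cast
      field_simp
  refine key.congr' ?_
  filter_upwards with ρ
  rw [hu, ← integral_const_mul]
end

section
/- Let n ≥ 1, let L and K be n×n complex matrices, let h > 0 be real, let φ ∈ ℝ, and let u, b ∈ ℂⁿ. Then u satisfies the Complex Stretched Grid system −((1/(e^{iφ}h²))·L + K)·u = b if and only if u satisfies the Complex Shifted Laplacian system −((1/h²)·L + e^{iφ}·K)·u = e^{iφ}·b. -/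
/-- **Equivalence of the Complex Stretched Grid and Complex Shifted Laplacian systems.**
For `n×n` complex matrices `L`, `K`, real `h > 0`, `φ ∈ ℝ` and vectors `u`, `b`, one has
`−((1/(e^{iφ}h²))·L + K)·u = b` iff `−((1/h²)·L + e^{iφ}·K)·u = e^{iφ}·b`. -/
theorem csg_iff_csl (n : ℕ) (hn : 1 ≤ n) (L K : Matrix (Fin n) (Fin n) ℂ)
    (h : ℝ) (hh : 0 < h) (φ : ℝ) (u b : Fin n → ℂ) :
    (-((1 / (Complex.exp ((φ : ℂ) * Complex.I) * (h : ℂ) ^ 2)) • L + K)).mulVec u = b ↔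
    (-((1 / (h : ℂ) ^ 2) • L + Complex.exp ((φ : ℂ) * Complex.I) • K)).mulVec u =
      Complex.exp ((φ : ℂ) * Complex.I) • b := by
  set e : ℂ := Complex.exp ((φ : ℂ) * Complex.I) with he
  have hene : e ≠ 0 := Complex.exp_ne_zero _
  have hhne : (h : ℂ) ≠ 0 := by exact_mod_cast hh.ne'
  have key : (-((1 / (h : ℂ) ^ 2) • L + e • K)) =
      e • (-((1 / (e * (h : ℂ) ^ 2)) • L + K)) := by
    rw [smul_neg, smul_add, smul_smul]
    congr 2
    congr 1; field_simp
  rw [key, Matrix.smul_mulVec]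
  exact ⟨fun H => by rw [H], fun H => smul_right_injective _ hene H⟩
end
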